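/- Let 0 < λ₁ < 1 < λ₂ with λ₁λ₂ < 1. Let (i_n)_{n≥1} be an i.i.d. sequence uniform on {1,2} and X = ∑_{m=0}^∞ λ_{i_1}⋯λ_{i_m} (with the empty product equal to 1), which converges almost surely. Define X^{(1)} = (1/λ₁) ∑_{m=1}^∞ λ_{i_1}⋯λ_{i_m} · o(m), where o(m) is the number of indices s ≤ m with i_s = 1. Then with c = (λ₂(1−λ₁)/(λ₂−1) + 1)^{−1} > 0, almost surely X^{(1)} ≥ c·X. -/

import Mathlib

set_option maxHeartbeats 1000000

open MeasureTheory ProbabilityTheory Finset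

lemma det_aux {l1 l2 : ℝ} (h0 : 0 < l1) (h1 : l1 < 1) (h2 : 1 < l2)
    (f : ℕ → ℝ) (hf : ∀ s, f s = l1 ∨ f s = l2)
    (hone : ∃ s, 1 ≤ s ∧ f s = l1)
    (hsum : Summable (fun m : ℕ => (∏ s ∈ Finset.Icc 1 m, f s) * ((m : ℝ) + 1))) :
    Summable (fun m : ℕ => ∏ s ∈ Finset.Icc 1 m, f s) ∧
      (l2 * (1 - l1) / (l2 - 1) + 1)⁻¹ * (∑' m : ℕ, ∏ s ∈ Finset.Icc 1 m, f s) ≤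
        (1 / l1) * ∑' m : ℕ, (∏ s ∈ Finset.Icc 1 m, f s) *
          (((Finset.Icc 1 m).filter (fun s => f s = l1)).card : ℝ) := by
  classical
  have hl2pos : (0:ℝ) < l2 := lt_trans one_pos h2
  have hfl1 : ∀ s, l1 ≤ f s := fun s => (hf s).elim (fun h => h.ge) (fun h => h ▸ (h1.trans h2).le)
  have hfpos : ∀ s, 0 < f s := fun s => lt_of_lt_of_le h0 (hfl1 s)
  set P : ℕ → ℝ := fun m => ∏ s ∈ Finset.Icc 1 m, f s with hPdef
  set o : ℕ → ℝ := fun m => (((Finset.Icc 1 m).filter (fun s => f s = l1)).card : ℝ) with hodef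
  have hPpos : ∀ m, 0 < P m := fun m => Finset.prod_pos (fun s _ => hfpos s)
  have ho_nonneg : ∀ m, 0 ≤ o m := fun m => Nat.cast_nonneg _
  have ho_le : ∀ m, o m ≤ (m : ℝ) + 1 := by
    intro m
    have h : ((Finset.Icc 1 m).filter (fun s => f s = l1)).card ≤ m := by
      calc ((Finset.Icc 1 m).filter (fun s => f s = l1)).card ≤ (Finset.Icc 1 m).card :=
            Finset.card_filter_le _ _
        _ = m := by rw [Nat.card_Icc]; omega
    have h' : (((Finset.Icc 1 m).filter (fun s => f s = l1)).card : ℝ) ≤ (m : ℝ) := by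
      exact_mod_cast h
    simp only [hodef]
    linarith
  have hSP : Summable P := by
    refine hsum.of_nonneg_of_le (fun m => (hPpos m).le) (fun m => ?_)
    have := hPpos m
    have : (0:ℝ) ≤ (m:ℝ) := Nat.cast_nonneg m
    nlinarith [hPpos m]
  have hSY : Summable (fun m => P m * o m) := by
    refine hsum.of_nonneg_of_le (fun m => mul_nonneg (hPpos m).le (ho_nonneg m)) (fun m => ?_)
    exact mul_le_mul_of_nonneg_left (ho_le m) (hPpos m).le
  refine ⟨hSP, ?_⟩
  set t := Nat.find hone with htdef
  obtain ⟨ht1, htl1⟩ : 1 ≤ t ∧ f t = l1 := Nat.find_spec hone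
  have hmin : ∀ s, 1 ≤ s → s < t → f s = l2 := by
    intro s hs1 hst
    have := Nat.find_min hone hst
    rcases hf s with h | h
    · exact absurd ⟨hs1, h⟩ this
    · exact h
  clear_value t
  have hPgeo : ∀ m, m < t → P m = l2 ^ m := by
    intro m hm
    simp only [hPdef]
    calc (∏ s ∈ Finset.Icc 1 m, f s) = ∏ s ∈ Finset.Icc 1 m, l2 := by
          refine Finset.prod_congr rfl (fun s hs => ?_)
          rw [Finset.mem_Icc] at hs
          exact hmin s hs.1 (lt_of_le_of_lt hs.2 hm)
      _ = l2 ^ m := by rw [Finset.prod_const, Nat.card_Icc]; norm_num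
  obtain ⟨u, hu⟩ : ∃ u, t = u + 1 := ⟨t - 1, by omega⟩
  have hPt : P t = l2 ^ u * l1 := by
    have hP1 : P t = P u * f t := by
      simp only [hPdef, hu]
      exact Finset.prod_Icc_succ_top (by omega) f
    rw [hP1, hPgeo u (by omega), htl1]
  have hPtail : ∀ j : ℕ, P t * l1 ^ j ≤ P (j + t) := by
    intro j
    have hsplit : P (j + t) = P t * ∏ s ∈ Finset.Ioc t (t + j), f s := by
      simp only [hPdef]
      have h1' : Finset.Icc 1 (j + t) = Finset.Ioc 0 (t + j) := by
        exact (Finset.Icc_add_one_left_eq_Ioc 0 (j + t)).trans (by rw [Nat.add_comm])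
      have h2' : Finset.Icc 1 t = Finset.Ioc 0 t := Finset.Icc_add_one_left_eq_Ioc 0 t
      rw [h1', h2', ← Finset.prod_Ioc_consecutive f (Nat.zero_le t) (by omega)]
    rw [hsplit]
    have hcard : (Finset.Ioc t (t + j)).card = j := by rw [Nat.card_Ioc]; omega
    have hgeq : (l1 : ℝ) ^ j ≤ ∏ s ∈ Finset.Ioc t (t + j), f s := by
      calc (l1:ℝ) ^ j = ∏ _s ∈ Finset.Ioc t (t + j), l1 := by rw [Finset.prod_const, hcard]
        _ ≤ ∏ s ∈ Finset.Ioc t (t + j), f s :=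
            Finset.prod_le_prod (fun s _ => h0.le) (fun s _ => hfl1 s)
    exact mul_le_mul_of_nonneg_left hgeq (hPpos t).le
  have hStail : Summable (fun j => P (j + t)) := (summable_nat_add_iff t).2 hSP
  set B := ∑' j : ℕ, P (j + t) with hBdef
  have hBpos : 0 < B := Summable.tsum_pos hStail (fun j => (hPpos _).le) 0 (hPpos _)
  have hPtB : P t ≤ (1 - l1) * B := by
    have hgs : Summable (fun j : ℕ => P t * l1 ^ j) :=
      (summable_geometric_of_lt_one h0.le h1).mul_left _
    have hle : ∑' j : ℕ, P t * l1 ^ j ≤ B := Summable.tsum_le_tsum hPtail hgs hStail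
    rw [tsum_mul_left, tsum_geometric_of_lt_one h0.le h1] at hle
    have h' : P t / (1 - l1) ≤ B := by rwa [div_eq_mul_inv]
    have := (div_le_iff₀ (by linarith : (0:ℝ) < 1 - l1)).1 h'
    linarith
  have hYB : B ≤ ∑' m : ℕ, P m * o m := by
    have hsplit : ∑' m : ℕ, P m * o m
        = (∑ m ∈ Finset.range t, P m * o m) + ∑' j : ℕ, P (j + t) * o (j + t) :=
      (Summable.sum_add_tsum_nat_add t hSY).symm
    have hzero : ∀ m < t, o m = 0 := by
      intro m hm
      simp only [hodef, Nat.cast_eq_zero, Finset.card_eq_zero]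
      rw [Finset.filter_eq_empty_iff]
      intro s hs
      rw [Finset.mem_Icc] at hs
      rw [hmin s hs.1 (lt_of_le_of_lt hs.2 hm)]
      intro h; linarith
    have h1' : (∑ m ∈ Finset.range t, P m * o m) = 0 := by
      refine Finset.sum_eq_zero (fun m hm => ?_)
      rw [Finset.mem_range] at hm
      rw [hzero m hm, mul_zero]
    have h2' : ∑' j : ℕ, P (j + t) ≤ ∑' j : ℕ, P (j + t) * o (j + t) := by
      refine Summable.tsum_le_tsum (fun j => ?_) hStail ((summable_nat_add_iff t).2 hSY)
      have hcard : (0:ℝ) + 1 ≤ o (j + t) := by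
        have hmem : t ∈ (Finset.Icc 1 (j + t)).filter (fun s => f s = l1) := by
          refine Finset.mem_filter.2 ⟨?_, htl1⟩
          rw [Finset.mem_Icc]; omega
        have hc := Finset.card_pos.2 ⟨t, hmem⟩
        have : (1:ℝ) ≤ (((Finset.Icc 1 (j+t)).filter (fun s => f s = l1)).card : ℝ) := by
          exact_mod_cast hc
        simp only [hodef]; linarith
      nlinarith [hPpos (j + t)]
    rw [hsplit, h1']
    linarith
  have hX : ∑' m : ℕ, P m = (∑ m ∈ Finset.range t, P m) + B :=
    (Summable.sum_add_tsum_nat_add t hSP).symm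
  have hS0 : (∑ m ∈ Finset.range t, P m) ≤ l2 ^ t / (l2 - 1) := by
    have hsum' : (∑ m ∈ Finset.range t, P m) = ∑ m ∈ Finset.range t, l2 ^ m := by
      refine Finset.sum_congr rfl (fun m hm => ?_)
      rw [Finset.mem_range] at hm
      exact hPgeo m hm
    rw [hsum', geom_sum_eq (by linarith : l2 ≠ 1)]
    gcongr
    · linarith
  set E := l2 * (1 - l1) / (l2 - 1) with hEdef
  have hEnn : 0 ≤ E := div_nonneg (by nlinarith) (by linarith)
  set Y := ∑' m : ℕ, P m * o m with hYdef
  have hYpos : 0 < Y := lt_of_lt_of_le hBpos hYB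
  have hS0' : (∑ m ∈ Finset.range t, P m) ≤ E * (B / l1) := by
    have hlt : l2 ^ t / (l2 - 1) ≤ E * (B / l1) := by
      have hpt : l2 ^ t = l2 * (P t / l1) := by
        rw [hPt, hu, pow_succ]
        field_simp
      rw [hpt, hEdef]
      have hP' : P t / l1 ≤ (1 - l1) * B / l1 :=
        div_le_div_of_nonneg_right hPtB h0.le
      calc l2 * (P t / l1) / (l2 - 1)
          ≤ l2 * ((1 - l1) * B / l1) / (l2 - 1) :=
            div_le_div_of_nonneg_right
              (mul_le_mul_of_nonneg_left hP' hl2pos.le) (by linarith)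
        _ = l2 * (1 - l1) / (l2 - 1) * (B / l1) := by ring
    exact hS0.trans hlt
  have hfinal : (∑ m ∈ Finset.range t, P m) + B ≤ (E + 1) * ((1 / l1) * Y) := by
    have hBl : B / l1 ≤ (1 / l1) * Y := by
      rw [div_eq_mul_inv, one_div]
      calc B * l1⁻¹ ≤ Y * l1⁻¹ := by gcongr
        _ = l1⁻¹ * Y := mul_comm _ _
    have hB2 : B ≤ (1 / l1) * Y := by
      have h1l : (1:ℝ) ≤ 1 / l1 := by rw [le_div_iff₀ h0]; linarith
      calc B ≤ Y := hYB
        _ = 1 * Y := (one_mul Y).symm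
        _ ≤ (1 / l1) * Y := by gcongr
    calc (∑ m ∈ Finset.range t, P m) + B ≤ E * (B / l1) + (1 / l1) * Y := by
          exact add_le_add hS0' hB2
      _ ≤ E * ((1 / l1) * Y) + (1 / l1) * Y := by gcongr
      _ = (E + 1) * ((1 / l1) * Y) := by ring
  have hgoal : (E + 1)⁻¹ * (∑' m : ℕ, P m) ≤ (1 / l1) * Y := by
    have hE1 : (0:ℝ) < E + 1 := by linarith
    rw [hX]
    calc (E + 1)⁻¹ * ((∑ m ∈ Finset.range t, P m) + B)
        ≤ (E + 1)⁻¹ * ((E + 1) * ((1 / l1) * Y)) := by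
          gcongr
      _ = (1 / l1) * Y := by field_simp
  exact hgoal

/-- For `0 < λ₁ < 1 < λ₂` with `λ₁λ₂ < 1`, and `(L n)_{n ≥ 1}` i.i.d. taking the
values `λ₁` and `λ₂` each with probability `1/2`, set
`X = ∑_{m≥0} λ_{i_1}⋯λ_{i_m}` and
`X⁽¹⁾ = (1/λ₁) ∑_{m≥1} λ_{i_1}⋯λ_{i_m}·o(m)`, where `o(m)` is the number of
`s ≤ m` with `i_s = 1` (i.e. `L s = λ₁`).  Then almost surely the series for `X`
converges and `X⁽¹⁾ ≥ c·X` with `c = (λ₂(1−λ₁)/(λ₂−1) + 1)⁻¹`. -/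
theorem formal_derivative_ge_const_mul
    {Ω : Type*} [MeasurableSpace Ω] (μ : Measure Ω) [IsProbabilityMeasure μ]
    (l1 l2 : ℝ) (h0 : 0 < l1) (h1 : l1 < 1) (h2 : 1 < l2) (h3 : l1 * l2 < 1)
    (L : ℕ → Ω → ℝ) (hmeas : ∀ n, Measurable (L n))
    (hindep : iIndepFun L μ)
    (hdist : ∀ n, Measure.map (L n) μ =
      (1/2 : ENNReal) • Measure.dirac l1 + (1/2 : ENNReal) • Measure.dirac l2) :
    ∀ᵐ ω ∂μ,
      Summable (fun m : ℕ => ∏ s ∈ Finset.Icc 1 m, L s ω) ∧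
      (l2 * (1 - l1) / (l2 - 1) + 1)⁻¹ * (∑' m : ℕ, ∏ s ∈ Finset.Icc 1 m, L s ω) ≤
        (1 / l1) * ∑' m : ℕ, (∏ s ∈ Finset.Icc 1 m, L s ω) *
          (((Finset.Icc 1 m).filter (fun s => L s ω = l1)).card : ℝ) := by
  have hl2pos : (0:ℝ) < l2 := lt_trans one_pos h2
  have hne : l2 ≠ l1 := by intro h; linarith
  -- a.s. values in {l1, l2}
  have hval : ∀ᵐ ω ∂μ, ∀ s, L s ω = l1 ∨ L s ω = l2 := by
    rw [ae_all_iff]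
    intro n
    have hms : MeasurableSet ({l1, l2} : Set ℝ) :=
      (measurableSet_singleton l2).insert l1
    have hz : μ (L n ⁻¹' ({l1, l2} : Set ℝ)ᶜ) = 0 := by
      rw [← Measure.map_apply (hmeas n) hms.compl, hdist n]
      simp [Measure.dirac_apply]
    rw [ae_iff]
    have hset : {ω | ¬(L n ω = l1 ∨ L n ω = l2)} = L n ⁻¹' ({l1, l2} : Set ℝ)ᶜ := by
      ext ω
      simp [Set.mem_preimage]
    rw [hset]
    exact hz
  -- each preimage of {l1}ᶜ has measure 1/2
  have hhalf : ∀ n, μ (L n ⁻¹' ({l1}ᶜ : Set ℝ)) = 1/2 := by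
    intro n
    rw [← Measure.map_apply (hmeas n) (measurableSet_singleton l1).compl, hdist n]
    simp [Measure.dirac_apply, hne]
  -- a.s. there is some s ≥ 1 with L s ω = l1
  have hone : ∀ᵐ ω ∂μ, ∃ s, 1 ≤ s ∧ L s ω = l1 := by
    rw [ae_iff]
    have hbound : ∀ n : ℕ, μ {ω | ¬ ∃ s, 1 ≤ s ∧ L s ω = l1} ≤ (1/2 : ENNReal)^n := by
      intro n
      have hsub : {ω | ¬ ∃ s, 1 ≤ s ∧ L s ω = l1}
          ⊆ ⋂ s ∈ Finset.Icc 1 n, L s ⁻¹' ({l1}ᶜ : Set ℝ) := by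
        intro ω hω
        simp only [Set.mem_iInter, Set.mem_preimage, Set.mem_compl_iff,
          Set.mem_singleton_iff]
        intro s hs h
        rw [Finset.mem_Icc] at hs
        exact hω ⟨s, hs.1, h⟩
      refine (measure_mono hsub).trans ?_
      rw [hindep.measure_inter_preimage_eq_mul (Finset.Icc 1 n)
        (fun i _ => (measurableSet_singleton l1).compl)]
      refine le_of_eq ?_
      calc ∏ i ∈ Finset.Icc 1 n, μ (L i ⁻¹' ({l1}ᶜ : Set ℝ))
          = ∏ _i ∈ Finset.Icc 1 n, (1/2 : ENNReal) :=
            Finset.prod_congr rfl (fun i _ => hhalf i)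
        _ = (1/2 : ENNReal)^n := by rw [Finset.prod_const, Nat.card_Icc]; congr 1
    have htend : Filter.Tendsto (fun n : ℕ => (1/2 : ENNReal)^n) Filter.atTop (nhds 0) :=
      ENNReal.tendsto_pow_atTop_nhds_zero_of_lt_one (by norm_num)
    exact le_antisymm (ge_of_tendsto' htend hbound) zero_le
  -- strong law of large numbers for the logs
  set Y : ℕ → Ω → ℝ := fun n ω => Real.log (L n ω) with hY
  have hYmeas : ∀ n, Measurable (Y n) := fun n => Real.measurable_log.comp (hmeas n)
  have hmapY : ∀ n, Measure.map (Y n) μ = Measure.map Real.log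
      ((1/2 : ENNReal) • Measure.dirac l1 + (1/2 : ENNReal) • Measure.dirac l2) := by
    intro n
    have : Y n = Real.log ∘ L n := rfl
    rw [this, ← Measure.map_map Real.measurable_log (hmeas n), hdist n]
  have hident : ∀ i, IdentDistrib (Y i) (Y 0) μ μ := fun i =>
    ⟨(hYmeas i).aemeasurable, (hYmeas 0).aemeasurable, by rw [hmapY i, hmapY 0]⟩
  have hpairs : Pairwise (Function.onFun (IndepFun · · μ) Y) := fun i j hij =>
    (hindep.indepFun hij).comp Real.measurable_log Real.measurable_log
  have hint : Integrable (Y 0) μ := by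
    refine (integrable_const (max |Real.log l1| |Real.log l2|)).mono'
      ((hYmeas 0).aestronglyMeasurable) ?_
    filter_upwards [hval] with ω hω
    rcases hω 0 with h | h
    · simp only [hY, h, Real.norm_eq_abs]
      exact le_max_left _ _
    · simp only [hY, h, Real.norm_eq_abs]
      exact le_max_right _ _
  have hEval : (μ[Y 0]) = (Real.log l1 + Real.log l2)/2 := by
    have hmap : μ[Y 0] = ∫ x, Real.log x ∂(Measure.map (L 0) μ) :=
      (integral_map (hmeas 0).aemeasurable Real.measurable_log.aestronglyMeasurable).symm
    have hi1 : Integrable Real.log ((1/2 : ENNReal) • Measure.dirac l1) :=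
      (((integrable_const (Real.log l1)).congr
        (ae_eq_dirac Real.log).symm)).smul_measure (by norm_num)
    have hi2 : Integrable Real.log ((1/2 : ENNReal) • Measure.dirac l2) :=
      (((integrable_const (Real.log l2)).congr
        (ae_eq_dirac Real.log).symm)).smul_measure (by norm_num)
    rw [hmap, hdist 0, integral_add_measure hi1 hi2, integral_smul_measure,
      integral_smul_measure, integral_dirac, integral_dirac]
    norm_num
    ring
  have hEneg : (μ[Y 0]) < 0 := by
    rw [hEval]
    have : Real.log l1 + Real.log l2 = Real.log (l1 * l2) :=
      (Real.log_mul h0.ne' (by linarith)).symm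
    rw [this]
    have := Real.log_neg (mul_pos h0 hl2pos) h3
    linarith
  have hslln := strong_law_ae_real Y hint hpairs hident
  filter_upwards [hval, hone, hslln] with ω hv ho htend
  -- summability with an extra factor (m+1)
  have hsum : Summable (fun m : ℕ => (∏ s ∈ Finset.Icc 1 m, L s ω) * ((m:ℝ)+1)) := by
    set E := μ[Y 0] with hEdef
    set ρ := Real.exp (E/2) with hρ
    have hρ1 : ρ < 1 := Real.exp_lt_one_iff.2 (by linarith)
    have hρ0 : (0:ℝ) < ρ := Real.exp_pos _
    have hev : ∀ᶠ n : ℕ in Filter.atTop,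
        (∑ i ∈ Finset.range n, Y i ω)/(n : ℝ) < E/2 :=
      htend.eventually_lt_const (by linarith)
    obtain ⟨N, hN⟩ := Filter.eventually_atTop.1 hev
    set C := ρ * Real.exp (-(Y 0 ω)) with hC
    have hbnd : ∀ m, N ≤ m → (∏ s ∈ Finset.Icc 1 m, L s ω) * ((m:ℝ)+1)
        ≤ C * (((m:ℝ)+1) * ρ^m) := by
      intro m hm
      have hP : (0:ℝ) < ∏ s ∈ Finset.Icc 1 m, L s ω :=
        Finset.prod_pos fun s _ => (hv s).elim (fun h => h ▸ h0) (fun h => h ▸ hl2pos)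
      have hlogP : Real.log (∏ s ∈ Finset.Icc 1 m, L s ω) = ∑ s ∈ Finset.Icc 1 m, Y s ω :=
        Real.log_prod (fun s _ => by
          have := (hv s).elim (fun h => h ▸ h0) (fun h => h ▸ hl2pos)
          exact this.ne')
      have hsplit : ∑ i ∈ Finset.range (m+1), Y i ω
          = Y 0 ω + ∑ s ∈ Finset.Icc 1 m, Y s ω := by
        have hr : Finset.range (m+1) = insert 0 (Finset.Icc 1 m) := by
          ext x; simp [Finset.mem_range, Finset.mem_Icc]; omega
        rw [hr, Finset.sum_insert (by simp)]
      have h1n : (∑ i ∈ Finset.range (m+1), Y i ω) < ((m:ℝ)+1) * (E/2) := by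
        have hh := hN (m+1) (by omega)
        have hcast : ((m+1 : ℕ) : ℝ) = (m:ℝ)+1 := by push_cast; ring
        rw [hcast] at hh
        rw [div_lt_iff₀ (by positivity : (0:ℝ) < (m:ℝ)+1)] at hh
        linarith
      have hlog_le : Real.log (∏ s ∈ Finset.Icc 1 m, L s ω)
          ≤ ((m:ℝ)+1)*(E/2) - Y 0 ω := by
        rw [hlogP]
        rw [hsplit] at h1n
        linarith
      have hPle : (∏ s ∈ Finset.Icc 1 m, L s ω) ≤ ρ^(m+1) * Real.exp (-(Y 0 ω)) := by
        calc (∏ s ∈ Finset.Icc 1 m, L s ω)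
            = Real.exp (Real.log (∏ s ∈ Finset.Icc 1 m, L s ω)) :=
              (Real.exp_log hP).symm
          _ ≤ Real.exp (((m:ℝ)+1)*(E/2) - Y 0 ω) := Real.exp_le_exp.2 hlog_le
          _ = ρ^(m+1) * Real.exp (-(Y 0 ω)) := by
              rw [sub_eq_add_neg, Real.exp_add]
              congr 1
              have : ((m:ℝ)+1) * (E/2) = ((m+1 : ℕ) : ℝ) * (E/2) := by push_cast; ring
              rw [this, Real.exp_nat_mul]
      calc (∏ s ∈ Finset.Icc 1 m, L s ω) * ((m:ℝ)+1)
          ≤ (ρ^(m+1) * Real.exp (-(Y 0 ω))) * ((m:ℝ)+1) := by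
            apply mul_le_mul_of_nonneg_right hPle (by positivity)
        _ = C * (((m:ℝ)+1) * ρ^m) := by rw [hC, pow_succ]; ring
    have hgeom : Summable (fun m : ℕ => C * (((m:ℝ)+1) * ρ^m)) := by
      apply Summable.mul_left
      have hs1 := summable_pow_mul_geometric_of_norm_lt_one 1
        (r := ρ) (by rwa [Real.norm_eq_abs, abs_of_pos hρ0])
      have hs2 := summable_geometric_of_lt_one hρ0.le hρ1
      have := hs1.add hs2
      refine this.congr (fun m => ?_)
      push_cast
      ring
    rw [← summable_nat_add_iff N]
    refine Summable.of_nonneg_of_le (fun m => ?_) (fun m => hbnd (m+N) (by omega))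
      ((summable_nat_add_iff N).2 hgeom)
    have hP : (0:ℝ) < ∏ s ∈ Finset.Icc 1 (m+N), L s ω :=
      Finset.prod_pos fun s _ => (hv s).elim (fun h => h ▸ h0) (fun h => h ▸ hl2pos)
    positivity
  exact det_aux h0 h1 h2 (fun s => L s ω) hv ho hsum
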